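/- For integers T ≥ 2, k with 1 ≤ k < ⌈T/2⌉, and n = 2^T − 1, the minimal T_k satisfying ∑_{i=1}^{k} C(T_k, i) ≥ n is at least 2^{(T−1)/k} · k^{(k−1)/k} / e. -/

import Mathlib

/-- `choose n` is monotone on `[0, n/2]`. -/
lemma choose_mono_of_le_half {n a b : ℕ} (hab : a ≤ b) (hb : b ≤ n / 2) :
    n.choose a ≤ n.choose b := by
  induction b with
  | zero => simp_all
  | succ b ih =>
    rcases Nat.eq_or_lt_of_le hab with rfl | h
    · exact le_rfl
    · exact le_trans (ih (Nat.lt_succ_iff.mp h) (le_trans (Nat.le_succ b) hb))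
        (Nat.choose_le_succ_of_lt_half_left (Nat.lt_of_succ_le hb))

/-- For integers `T ≥ 2`, `1 ≤ k < ⌈T/2⌉` and `n = 2^T - 1`, any `m` satisfying
`∑_{i=1}^k C(m,i) ≥ n` obeys `m ≥ 2^((T-1)/k) · k^((k-1)/k) / e`. -/
theorem stmt0 (T k : ℕ) (hT : 2 ≤ T) (hk1 : 1 ≤ k) (hk2 : k < ⌈(T : ℚ) / 2⌉₊)
    (m : ℕ) (hm : 2 ^ T - 1 ≤ ∑ i ∈ Finset.Icc 1 k, m.choose i) :
    (2 : ℝ) ^ (((T : ℝ) - 1) / k) * (k : ℝ) ^ (((k : ℝ) - 1) / k) / Real.exp 1 ≤ m := by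
  -- Step 0: T ≥ 2k + 1
  have hTk : 2 * k + 1 ≤ T := by
    have : (k : ℚ) < (T : ℚ) / 2 + 1 := lt_of_lt_of_le (by exact_mod_cast hk2)
      (Nat.ceil_lt_add_one (by positivity)).le
    have : (2 * k : ℚ) < T + 2 := by linarith
    have h2 : 2 * k < T + 2 := by exact_mod_cast this
    -- need 2k+1 ≤ T, i.e. 2k < T. We have k < ⌈T/2⌉₊ so k+1 ≤ ⌈T/2⌉₊ ≤ (T+1)/2
    have hceil : ⌈(T : ℚ) / 2⌉₊ ≤ (T + 1) / 2 := by
      apply Nat.ceil_le.mpr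
      rw [div_le_iff₀ (by norm_num : (0:ℚ) < 2)]
      have hx : T ≤ ((T + 1) / 2) * 2 := by omega
      exact_mod_cast hx
    have hk' : k + 1 ≤ (T + 1) / 2 := le_trans hk2 hceil
    omega
  -- Step 1: m ≥ T  (since ∑_{i=1}^k C(m,i) ≤ 2^m - 1)
  have hsum_le : ∑ i ∈ Finset.Icc 1 k, m.choose i ≤ 2 ^ m - 1 := by
    have h1 : ∑ i ∈ Finset.Icc 1 k, m.choose i ≤ ∑ i ∈ Finset.Icc 1 (max k m), m.choose i :=
      Finset.sum_le_sum_of_subset (Finset.Icc_subset_Icc_right (le_max_left k m))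
    have h2 : ∑ i ∈ Finset.Icc 1 (max k m), m.choose i ≤ 2 ^ m - 1 := by
      have e1 : ∑ i ∈ Finset.range (max k m + 1), m.choose i = 2 ^ m := by
        rw [← Nat.sum_range_choose m]
        refine (Finset.sum_subset (Finset.range_subset_range.mpr (by omega)) ?_).symm
        intro x _ hx
        simp only [Finset.mem_range, not_lt] at hx
        exact Nat.choose_eq_zero_of_lt (by omega)
      have e2 : Finset.range (max k m + 1) = insert 0 (Finset.Icc 1 (max k m)) := by
        ext x
        simp only [Finset.mem_range, Finset.mem_insert, Finset.mem_Icc]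
        omega
      rw [e2, Finset.sum_insert (by simp)] at e1
      simp only [Nat.choose_zero_right] at e1
      omega
    exact le_trans h1 h2
  have hmT : T ≤ m := by
    by_contra h
    push_neg at h
    have : 2 ^ T - 1 ≤ 2 ^ m - 1 := le_trans hm hsum_le
    have h2 : (2:ℕ) ^ m < 2 ^ T := Nat.pow_lt_pow_right (by norm_num) h
    have := Nat.one_le_two_pow (n := m)
    omega
  have hkm : 2 * k + 1 ≤ m := le_trans hTk hmT
  -- Step 2: 2^(T-1) ≤ k * C(m,k)
  have hstep2 : 2 ^ (T - 1) ≤ k * m.choose k := by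
    have hmono : ∑ i ∈ Finset.Icc 1 k, m.choose i ≤ k * m.choose k := by
      calc ∑ i ∈ Finset.Icc 1 k, m.choose i
          ≤ ∑ _i ∈ Finset.Icc 1 k, m.choose k := by
            refine Finset.sum_le_sum fun i hi => ?_
            simp only [Finset.mem_Icc] at hi
            exact choose_mono_of_le_half hi.2 (by omega)
        _ = k * m.choose k := by
            rw [Finset.sum_const, Nat.card_Icc, smul_eq_mul, Nat.add_sub_cancel]
    have h1 : 2 ^ (T - 1) ≤ 2 ^ T - 1 := by
      have : 2 ^ T = 2 * 2 ^ (T - 1) := by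
        rw [← pow_succ']; congr 1; omega
      have := Nat.one_le_two_pow (n := T - 1)
      omega
    exact le_trans h1 (le_trans hm hmono)
  -- Move to ℝ
  have hk0 : (0:ℝ) < k := by exact_mod_cast hk1
  have hkne : (k:ℝ) ≠ 0 := ne_of_gt hk0
  -- Step 3: C(m,k) * k! ≤ m^k
  have hstep3 : m.choose k * k.factorial ≤ m ^ k := by
    rw [mul_comm, ← Nat.descFactorial_eq_factorial_mul_choose]
    exact Nat.descFactorial_le_pow m k
  -- Step 4: k^k ≤ k! * e^k
  have hfactpos : (0:ℝ) < (k.factorial : ℝ) := by exact_mod_cast k.factorial_pos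
  have hstep4 : (k : ℝ) ^ k ≤ (k.factorial : ℝ) * Real.exp 1 ^ k := by
    have h := Real.pow_div_factorial_le_exp (x := (k:ℝ)) (by positivity) k
    rw [div_le_iff₀ hfactpos] at h
    have he : Real.exp (k:ℝ) = Real.exp 1 ^ k := by
      rw [← Real.exp_nat_mul, mul_one]
    rw [he] at h
    linarith
  -- Combine: 2^(T-1) * k^(k-1) ≤ m^k * e^k  in ℝ
  have hfact0 : (0:ℝ) < (k.factorial : ℝ) := by exact_mod_cast k.factorial_pos
  have hcombine : (2:ℝ) ^ (T - 1 : ℕ) * (k:ℝ) ^ (k - 1 : ℕ) ≤ (m:ℝ) ^ k * Real.exp 1 ^ k := by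
    have h2 : (2:ℝ) ^ (T-1:ℕ) ≤ (k:ℝ) * (m.choose k : ℝ) := by exact_mod_cast hstep2
    have h3 : (m.choose k : ℝ) * (k.factorial : ℝ) ≤ (m:ℝ) ^ k := by exact_mod_cast hstep3
    have hkk : (k:ℝ) ^ k = (k:ℝ) * (k:ℝ) ^ (k - 1 : ℕ) := by
      rw [← pow_succ']; congr 1; omega
    -- 2^(T-1) * k^k ≤ k * C * k^k ≤ k * C * k! * e^k ≤ k * m^k * e^k
    have hCpos : (0:ℝ) ≤ (m.choose k : ℝ) := by positivity
    have key : (2:ℝ) ^ (T-1:ℕ) * (k:ℝ) ^ k ≤ (k:ℝ) * ((m:ℝ) ^ k * Real.exp 1 ^ k) := by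
      calc (2:ℝ) ^ (T-1:ℕ) * (k:ℝ) ^ k
          ≤ ((k:ℝ) * (m.choose k : ℝ)) * ((k.factorial : ℝ) * Real.exp 1 ^ k) := by
            apply mul_le_mul h2 hstep4 (by positivity) (by positivity)
        _ = (k:ℝ) * (((m.choose k : ℝ) * (k.factorial : ℝ)) * Real.exp 1 ^ k) := by ring
        _ ≤ (k:ℝ) * ((m:ℝ) ^ k * Real.exp 1 ^ k) := by
            apply mul_le_mul_of_nonneg_left _ hk0.le
            exact mul_le_mul_of_nonneg_right h3 (by positivity)
    rw [hkk] at key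
    have := (mul_le_mul_iff_right₀ hk0).mp (by linarith [key] : (k:ℝ) * ((2:ℝ)^(T-1:ℕ) * (k:ℝ)^(k-1:ℕ)) ≤ (k:ℝ) * ((m:ℝ)^k * Real.exp 1 ^ k))
    linarith
  -- Step 5: take k-th roots
  set L : ℝ := (2 : ℝ) ^ (((T : ℝ) - 1) / k) * (k : ℝ) ^ (((k : ℝ) - 1) / k) / Real.exp 1
  have hL0 : 0 ≤ L := by positivity
  have hLk : L ^ k = (2:ℝ) ^ (T - 1 : ℕ) * (k:ℝ) ^ (k - 1 : ℕ) / Real.exp 1 ^ k := by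
    rw [div_pow, mul_pow]
    congr 2
    · rw [← Real.rpow_natCast ((2:ℝ) ^ (((T:ℝ)-1)/k)) k, ← Real.rpow_mul (by norm_num),
        div_mul_cancel₀ _ hkne]
      rw [show ((T:ℝ) - 1) = ((T - 1 : ℕ) : ℝ) by push_cast [Nat.cast_sub (by omega : 1 ≤ T)]; ring]
      exact Real.rpow_natCast 2 (T - 1)
    · rw [← Real.rpow_natCast ((k:ℝ) ^ (((k:ℝ)-1)/k)) k, ← Real.rpow_mul hk0.le,
        div_mul_cancel₀ _ hkne]
      rw [show ((k:ℝ) - 1) = ((k - 1 : ℕ) : ℝ) by push_cast [Nat.cast_sub hk1]; ring]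
      exact Real.rpow_natCast _ (k - 1)
  have hLm : L ^ k ≤ (m:ℝ) ^ k := by
    rw [hLk, div_le_iff₀ (by positivity)]
    exact hcombine
  exact (pow_le_pow_iff_left₀ hL0 (Nat.cast_nonneg m) (by omega)).mp hLm
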